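/- Let c and c' be two proper 3-colourings of a graph G that differ on exactly one vertex x. Then for every cycle C of G with a fixed orientation, w(c, C) = w(c', C), where w(·, C) is the sum over the oriented edges of C of the edge weights w(·, x→y) ∈ {−1, 1} with w(·, x→y) ≡ colour(y) − colour(x) mod 3. Consequently, if proper 3-colourings c and d are in the same component of the reconfiguration graph R_3(G), then w(c, C) = w(d, C) for every oriented cycle C. -/
import Mathlib


/-- A colouring is proper if adjacent vertices receive different colours. -/
def ProperColouring {V α : Type*} (G : SimpleGraph V) (c : V → α) : Prop :=
  ∀ u v : V, G.Adj u v → c u ≠ c v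

/-- A single-vertex recolouring step: the new colouring is proper and differs
from the old one on exactly one vertex. -/
def RecolStep {V α : Type*} (G : SimpleGraph V) (c d : V → α) : Prop :=
  ProperColouring G d ∧ ∃ x : V, c x ≠ d x ∧ ∀ v : V, v ≠ x → c v = d v

/-- The weight of the oriented edge `x → y` under a 3-colouring `c`: the unique
value in `{-1, 1}` congruent to `c y - c x` modulo 3. -/
def edgeWeight {V : Type*} (c : V → ZMod 3) (x y : V) : ℤ :=
  if c y - c x = 1 then 1 else -1

/-- The weight of an oriented walk: the sum of the weights of its oriented
edges. -/
def walkWeight {V : Type*} {G : SimpleGraph V} (c : V → ZMod 3) {u v : V}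
    (p : G.Walk u v) : ℤ :=
  (p.darts.map (fun d => edgeWeight c d.toProd.1 d.toProd.2)).sum

/- Auxiliary lemmas -/

lemma stmt9_telescope {V : Type*} {G : SimpleGraph V} (h : V → ℤ) {u v : V} (p : G.Walk u v) :
    (p.darts.map (fun d => h d.toProd.2 - h d.toProd.1)).sum = h v - h u := by
  induction p with
  | nil => simp
  | cons hadj q ih => simp [SimpleGraph.Walk.darts, ih]

lemma stmt9_third : ∀ a b c : ZMod 3, a ≠ b → c ≠ a → c ≠ b → c = -(a+b) := by decide

lemma stmt9_keyA : ∀ a b : ZMod 3, a ≠ b →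
    ((if a - (-(a+b)) = 1 then (1:ℤ) else -1) - (if b - (-(a+b)) = 1 then 1 else -1))
    = -((if (-(a+b)) - a = 1 then (1:ℤ) else -1) - (if (-(a+b)) - b = 1 then 1 else -1)) := by
  decide

lemma stmt9_sum_map_sub {α : Type*} (l : List α) (f g : α → ℤ) :
    (l.map (fun x => f x - g x)).sum = (l.map f).sum - (l.map g).sum := by
  induction l with
  | nil => simp
  | cons a l ih => simp [ih]; ring

lemma stmt9_chain_proper {V : Type*} {G : SimpleGraph V} {c d : V → ZMod 3}
    (hrel : Relation.ReflTransGen (RecolStep G) c d) (hc : ProperColouring G c) :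
    ProperColouring G d := by
  induction hrel with
  | refl => exact hc
  | tail _ step _ => exact step.1

lemma stmt9_parti {V : Type*} (G : SimpleGraph V) :
    ∀ c c' : V → ZMod 3, ProperColouring G c → ProperColouring G c' →
      (∃ x : V, c x ≠ c' x ∧ ∀ v : V, v ≠ x → c v = c' v) →
      ∀ (u v : V) (p : G.Walk u v), u = v → walkWeight c p = walkWeight c' p := by
  classical
  rintro c c' hc hc' ⟨x, hx, hother⟩ u v p huv
  set a := c x with ha
  set b := c' x with hb
  set t : ZMod 3 := -(a + b) with ht
  set k : ℤ := (if a - t = 1 then (1:ℤ) else -1) - (if b - t = 1 then 1 else -1) with hk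
  set h : V → ℤ := fun v => if v = x then k else 0 with hh
  have hhx : h x = k := by simp [hh]
  have hhne : ∀ v : V, v ≠ x → h v = 0 := fun v hv => if_neg hv
  have hdart : ∀ d : G.Dart,
      edgeWeight c d.toProd.1 d.toProd.2 - edgeWeight c' d.toProd.1 d.toProd.2
        = h d.toProd.2 - h d.toProd.1 := by
    intro d
    have hadj := d.adj
    by_cases h1 : d.toProd.1 = x
    · by_cases h2 : d.toProd.2 = x
      · exact absurd (h1 ▸ h2 ▸ hadj) (G.irrefl)
      · -- dart leaves x
        have hne1 : c d.toProd.2 ≠ a := (hc _ _ (h1 ▸ hadj)).symm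
        have hne2 : c d.toProd.2 ≠ b := by
          rw [hother d.toProd.2 h2]
          exact (hc' _ _ (h1 ▸ hadj)).symm
        have hcol : c d.toProd.2 = t := stmt9_third a b _ hx hne1 hne2
        have hcol' : c' d.toProd.2 = t := (hother d.toProd.2 h2).symm.trans hcol
        have key := stmt9_keyA a b hx
        rw [← ht] at key
        rw [hhne _ h2, h1, hhx]
        unfold edgeWeight
        rw [hcol, hcol', ← ha, ← hb]
        rw [← hk] at key
        linarith [key]
    · by_cases h2 : d.toProd.2 = x
      · -- dart enters x
        have hne1 : c d.toProd.1 ≠ a := fun hco => hc _ _ (h2 ▸ hadj).symm hco.symm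
        have hne2 : c d.toProd.1 ≠ b := by
          rw [hother d.toProd.1 h1]
          exact fun hco => hc' _ _ (h2 ▸ hadj).symm hco.symm
        have hcol : c d.toProd.1 = t := stmt9_third a b _ hx hne1 hne2
        have hcol' : c' d.toProd.1 = t := (hother d.toProd.1 h1).symm.trans hcol
        rw [hhne _ h1, h2, hhx]
        unfold edgeWeight
        rw [hcol, hcol', ← ha, ← hb, hk]
        ring
      · have e1 := hother d.toProd.1 h1
        have e2 := hother d.toProd.2 h2
        rw [hhne _ h1, hhne _ h2]
        unfold edgeWeight
        rw [e1, e2]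
        ring
  have hsum : (p.darts.map (fun d =>
      edgeWeight c d.toProd.1 d.toProd.2 - edgeWeight c' d.toProd.1 d.toProd.2)).sum
      = h v - h u := by
    rw [List.map_congr_left (fun d _ => hdart d)]
    exact stmt9_telescope h p
  have hsub := stmt9_sum_map_sub p.darts
    (fun d => edgeWeight c d.toProd.1 d.toProd.2)
    (fun d => edgeWeight c' d.toProd.1 d.toProd.2)
  rw [hsub] at hsum
  subst huv
  simp only [sub_self] at hsum
  unfold walkWeight
  omega

/-- (i) two proper 3-colourings differing on exactly one vertex
give the same weight to every oriented cycle; (ii) consequently proper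
3-colourings in the same component of the reconfiguration graph `R₃(G)` give
the same weight to every oriented cycle. -/
theorem stmt_9 {V : Type*} (G : SimpleGraph V) :
    (∀ c c' : V → ZMod 3, ProperColouring G c → ProperColouring G c' →
      (∃ x : V, c x ≠ c' x ∧ ∀ v : V, v ≠ x → c v = c' v) →
      ∀ (v : V) (p : G.Walk v v), p.IsCycle → walkWeight c p = walkWeight c' p) ∧
    (∀ c d : V → ZMod 3, ProperColouring G c →
      Relation.ReflTransGen (RecolStep G) c d →
      ∀ (v : V) (p : G.Walk v v), p.IsCycle →
        walkWeight c p = walkWeight d p) := by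
  constructor
  · intro c c' hc hc' hex v p _
    exact stmt9_parti G c c' hc hc' hex v v p rfl
  · intro c d hc hrel v p hp
    induction hrel with
    | refl => rfl
    | tail hcb step ih =>
      exact ih.trans (stmt9_parti G _ _ (stmt9_chain_proper hcb hc) step.1 step.2 v v p rfl)
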